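/- Let X = {x ∈ ℝᵖ : ∃ t ∈ T, xᵀ T_k x ≤ t_k, k ≤ K} be a basic ellitope and let a ∈ ℝᵖ be a row vector. Then max_{x ∈ X} aᵀx equals the value of the convex program min over λ ≥ 0 and υ ∈ ℝ of φ_T(λ) + υ subject to the 2×2-block matrix [[υ, aᵀ/2],[a/2, ∑_k λ_k T_k]] being positive semidefinite. -/

import Mathlib

open Matrix Set

-- symmetry of quadratic cross terms
lemma dot_symm {p : ℕ} (A : Matrix (Fin p) (Fin p) ℝ) (hA : A.IsHermitian)
    (x y : Fin p → ℝ) : x ⬝ᵥ A *ᵥ y = y ⬝ᵥ A *ᵥ x := by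
  have h : Aᵀ = A := (isHermitian_iff_isSymm.mp hA).eq
  rw [Matrix.dotProduct_mulVec, ← Matrix.mulVec_transpose, h, dotProduct_comm]

-- nonnegativity for real PSD
lemma psd_nonneg {p : ℕ} {A : Matrix (Fin p) (Fin p) ℝ} (hA : A.PosSemidef)
    (x : Fin p → ℝ) : 0 ≤ x ⬝ᵥ A *ᵥ x := by
  have := hA.dotProduct_mulVec_nonneg x
  simpa using this

-- quadratic form of a sum of smuls
lemma dot_sum_smul {p K : ℕ} (lam : Fin K → ℝ) (Tm : Fin K → Matrix (Fin p) (Fin p) ℝ)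
    (x : Fin p → ℝ) :
    x ⬝ᵥ (∑ k, lam k • Tm k) *ᵥ x = ∑ k, lam k * (x ⬝ᵥ Tm k *ᵥ x) := by
  have h1 : (∑ k, lam k • Tm k) *ᵥ x = ∑ k, lam k • (Tm k *ᵥ x) := by
    rw [show (∑ k, lam k • Tm k) *ᵥ x = (Matrix.mulVec.addMonoidHomLeft x) (∑ k, lam k • Tm k) from rfl,
      map_sum]
    refine Finset.sum_congr rfl fun k _ => ?_
    show (lam k • Tm k) *ᵥ x = lam k • Tm k *ᵥ x
    exact Matrix.smul_mulVec _ _ _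
  have h2 : ∀ w : Fin K → (Fin p → ℝ), x ⬝ᵥ (∑ k, w k) = ∑ k, x ⬝ᵥ w k := by
    intro w
    simp only [dotProduct, Finset.sum_apply, Finset.mul_sum]
    exact Finset.sum_comm
  rw [h1, h2]
  apply Finset.sum_congr rfl
  intro k _
  rw [dotProduct_smul, smul_eq_mul]

lemma dot_sum' {p K : ℕ} (Tm : Fin K → Matrix (Fin p) (Fin p) ℝ)
    (x : Fin p → ℝ) :
    x ⬝ᵥ (∑ k, Tm k) *ᵥ x = ∑ k, x ⬝ᵥ Tm k *ᵥ x := by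
  have := dot_sum_smul (fun _ => (1:ℝ)) Tm x
  simpa using this

-- convexity of psd quadratic form
lemma quad_convex {p : ℕ} {A : Matrix (Fin p) (Fin p) ℝ} (hA : A.PosSemidef)
    (x y : Fin p → ℝ) {α β : ℝ} (hα : 0 ≤ α) (hβ : 0 ≤ β) (hab : α + β = 1) :
    (α • x + β • y) ⬝ᵥ A *ᵥ (α • x + β • y) ≤ α * (x ⬝ᵥ A *ᵥ x) + β * (y ⬝ᵥ A *ᵥ y) := by
  have hs := psd_nonneg hA (x - y)
  have hxy := dot_symm A hA.1 x y
  have e1 : (x - y) ⬝ᵥ A *ᵥ (x - y)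
      = x ⬝ᵥ A *ᵥ x - 2 * (x ⬝ᵥ A *ᵥ y) + y ⬝ᵥ A *ᵥ y := by
    simp [Matrix.mulVec_sub, dotProduct_sub, sub_dotProduct, hxy]; ring
  have e2 : (α • x + β • y) ⬝ᵥ A *ᵥ (α • x + β • y)
      = α^2 * (x ⬝ᵥ A *ᵥ x) + 2*α*β * (x ⬝ᵥ A *ᵥ y) + β^2 * (y ⬝ᵥ A *ᵥ y) := by
    simp [Matrix.mulVec_add, dotProduct_add, add_dotProduct,
      Matrix.mulVec_smul, dotProduct_smul, smul_dotProduct, smul_eq_mul, hxy]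
    ring
  have hb : β = 1 - α := by linarith
  subst hb
  rw [e1] at hs
  rw [e2]
  nlinarith [mul_nonneg (mul_nonneg hα hβ) hs, hs]

-- continuity of quadratic form
lemma quad_continuous {p : ℕ} (Q : Matrix (Fin p) (Fin p) ℝ) :
    Continuous (fun x : Fin p → ℝ => x ⬝ᵥ Q *ᵥ x) := by
  unfold dotProduct Matrix.mulVec
  exact continuous_finset_sum _ fun i _ => (continuous_apply i).mul <|
    continuous_finset_sum _ fun j _ => continuous_const.mul (continuous_apply j)

-- lower bound for posdef quadratic form
lemma posdef_bound {p : ℕ} {Q : Matrix (Fin p) (Fin p) ℝ} (hQ : Q.PosDef) :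
    ∃ m : ℝ, 0 < m ∧ ∀ x : Fin p → ℝ, m * ‖x‖^2 ≤ x ⬝ᵥ Q *ᵥ x := by
  rcases Nat.eq_zero_or_pos p with hp | hp
  · refine ⟨1, one_pos, fun x => ?_⟩
    subst hp
    have hx : x = 0 := Subsingleton.elim _ _
    have h0 : x ⬝ᵥ Q *ᵥ x = 0 := by simp [hx]
    have h1 : ‖x‖ = 0 := by rw [hx]; exact norm_zero
    rw [h0, h1]; norm_num
  · have hne : (Metric.sphere (0 : Fin p → ℝ) 1).Nonempty := by
      haveI : Nonempty (Fin p) := ⟨⟨0, hp⟩⟩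
      refine ⟨fun _ => (1:ℝ), ?_⟩
      simp [mem_sphere_iff_norm, pi_norm_const]
    obtain ⟨x₀, hx₀, hmin⟩ := (isCompact_sphere (0 : Fin p → ℝ) 1).exists_isMinOn hne
      ((quad_continuous Q).continuousOn)
    rw [isMinOn_iff] at hmin
    have hx₀n : ‖x₀‖ = 1 := by simpa [mem_sphere_iff_norm] using hx₀
    have hx₀0 : x₀ ≠ 0 := by
      intro h; rw [h] at hx₀n; simp at hx₀n
    have hm : 0 < x₀ ⬝ᵥ Q *ᵥ x₀ := by
      have := hQ.dotProduct_mulVec_pos hx₀0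
      simpa using this
    refine ⟨x₀ ⬝ᵥ Q *ᵥ x₀, hm, fun x => ?_⟩
    by_cases hx : x = 0
    · simp [hx]
    · have hnx : 0 < ‖x‖ := norm_pos_iff.mpr hx
      have hu : (‖x‖⁻¹ • x) ∈ Metric.sphere (0 : Fin p → ℝ) 1 := by
        simp [mem_sphere_iff_norm, norm_smul, abs_of_nonneg (inv_nonneg.mpr hnx.le),
          inv_mul_cancel₀ hnx.ne']
      have h2 := hmin _ hu
      have e : (‖x‖⁻¹ • x) ⬝ᵥ Q *ᵥ (‖x‖⁻¹ • x) = ‖x‖⁻¹ * (‖x‖⁻¹ * (x ⬝ᵥ Q *ᵥ x)) := by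
        rw [Matrix.mulVec_smul, dotProduct_smul, smul_dotProduct]
        simp [smul_eq_mul]
      rw [e] at h2
      have h3 := mul_le_mul_of_nonneg_left h2 (sq_nonneg ‖x‖)
      have e2 : ‖x‖^2 * (‖x‖⁻¹ * (‖x‖⁻¹ * (x ⬝ᵥ Q *ᵥ x))) = x ⬝ᵥ Q *ᵥ x := by
        field_simp [pow_two]
      rw [e2] at h3
      linarith

-- linear functional decomposition on ℝ × (Fin K → ℝ)
lemma functional_decomp {K : ℕ} (f : (ℝ × (Fin K → ℝ)) →L[ℝ] ℝ) (s : ℝ) (u : Fin K → ℝ) :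
    f (s, u) = s * f (1, 0) + ∑ k, u k * f (0, Pi.single k 1) := by
  have hv : (s, u) = s • (((1:ℝ), (0 : Fin K → ℝ)) : ℝ × (Fin K → ℝ))
      + ∑ k, u k • ((((0:ℝ), (Pi.single k 1 : Fin K → ℝ))) : ℝ × (Fin K → ℝ)) := by
    rw [Prod.ext_iff]
    constructor
    · simp [Prod.fst_sum]
    · simp only [Prod.snd_add, Prod.smul_snd, Prod.snd_sum, smul_zero, smul_eq_mul]
      rw [zero_add]
      funext j
      rw [Finset.sum_apply]
      simp [Pi.single_apply]
  rw [hv, map_add, ContinuousLinearMap.map_smul, map_sum]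
  simp only [ContinuousLinearMap.map_smul, smul_eq_mul]

lemma le_of_forall_pos_linear {L d c : ℝ} (h : ∀ ε : ℝ, 0 < ε → L + ε * d < c) : L ≤ c := by
  by_contra hc
  push_neg at hc
  have hLc : 0 < L - c := by linarith
  have hε : 0 < (L - c) / (2 * (|d| + 1)) := by positivity
  have h2 := h _ hε
  have h3 : -( (L - c) / (2 * (|d| + 1)) * d) ≤ (L - c) / (2 * (|d| + 1)) * (|d| + 1) := by
    rw [← mul_neg]
    apply mul_le_mul_of_nonneg_left _ hε.le
    nlinarith [neg_abs_le d, abs_nonneg d]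
  have h4 : (L - c) / (2 * (|d| + 1)) * (|d| + 1) = (L - c) / 2 := by
    field_simp
  nlinarith

lemma nonpos_of_forall_pos_mul {d e c : ℝ} (h : ∀ n : ℝ, 0 < n → n * d + e < c) : d ≤ 0 := by
  by_contra hd
  push_neg at hd
  have hn : 0 < max 1 ((c - e) / d + 1) := lt_max_of_lt_left one_pos
  have h2 := h _ hn
  have h3 : (c - e) / d + 1 ≤ max 1 ((c - e) / d + 1) := le_max_right _ _
  have h4 : ((c - e) / d + 1) * d ≤ max 1 ((c - e) / d + 1) * d :=
    mul_le_mul_of_nonneg_right h3 hd.le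
  have h5 : ((c - e) / d + 1) * d = c - e + d := by field_simp
  nlinarith
lemma block_quad {p : ℕ} (υ : ℝ) (a : Fin p → ℝ) (D : Matrix (Fin p) (Fin p) ℝ)
    (s : ℝ) (x : Fin p → ℝ) :
    (Sum.elim (fun _ => s) x) ⬝ᵥ (Matrix.fromBlocks
        (fun _ _ => υ : Matrix (Fin 1) (Fin 1) ℝ)
        (fun _ j => a j / 2 : Matrix (Fin 1) (Fin p) ℝ)
        (fun i _ => a i / 2 : Matrix (Fin p) (Fin 1) ℝ) D) *ᵥ (Sum.elim (fun _ => s) x)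
      = υ * s^2 + s * (a ⬝ᵥ x) + x ⬝ᵥ D *ᵥ x := by
  erw [Matrix.fromBlocks_mulVec]
  have h1 : (Sum.elim (fun _ => s) x ∘ (Sum.inl : Fin 1 → Fin 1 ⊕ Fin p) : Fin 1 → ℝ)
      = fun _ => s := rfl
  have h2 : (Sum.elim (fun _ => s) x ∘ (Sum.inr : Fin p → Fin 1 ⊕ Fin p) : Fin p → ℝ) = x := rfl
  rw [h1, h2, sumElim_dotProduct_sumElim]
  simp only [dotProduct_add, dotProduct, Matrix.mulVec, Pi.add_apply,
    Fin.sum_univ_one, Finset.mul_sum, Finset.sum_mul, Finset.sum_add_distrib, ← Finset.sum_div]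
  simp only [mul_add, Finset.mul_sum, Finset.sum_add_distrib]
  have e : ∑ i, s * (a i / 2 * x i) + ∑ i, x i * (a i / 2 * s) = ∑ i, s * (a i * x i) := by
    rw [← Finset.sum_add_distrib]
    exact Finset.sum_congr rfl fun i _ => by ring
  have e2 : s * (υ * s) = υ * s ^ 2 := by ring
  linarith [e, e2]

lemma y_decomp {p : ℕ} (y : Fin 1 ⊕ Fin p → ℝ) :
    y = Sum.elim (fun _ => y (Sum.inl 0)) (y ∘ Sum.inr) := by
  funext i
  cases i with
  | inl i =>
    rw [Sum.elim_inl]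
    have : i = 0 := Subsingleton.elim i 0
    rw [this]
  | inr i => rfl
set_option maxHeartbeats 2000000 in
theorem stmt8 {p K : ℕ}
    (Tm : Fin K → Matrix (Fin p) (Fin p) ℝ)
    (T : Set (Fin K → ℝ))
    (hTsd : ∀ k, (Tm k).PosSemidef)
    (hTsum : (∑ k, Tm k).PosDef)
    (hTconv : Convex ℝ T) (hTcomp : IsCompact T)
    (hTnonneg : ∀ t ∈ T, ∀ k, 0 ≤ t k)
    (hTmono : ∀ t ∈ T, ∀ t' : Fin K → ℝ, (∀ k, 0 ≤ t' k) → (∀ k, t' k ≤ t k) → t' ∈ T)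
    (hTint : (interior T).Nonempty)
    (a : Fin p → ℝ)
    (X : Set (Fin p → ℝ))
    (hX : X = {x | ∃ t ∈ T, ∀ k, x ⬝ᵥ (Tm k) *ᵥ x ≤ t k}) :
    sSup {r | ∃ x ∈ X, r = a ⬝ᵥ x} =
      sInf {r | ∃ (lam : Fin K → ℝ) (υ : ℝ), (∀ k, 0 ≤ lam k) ∧
        (Matrix.fromBlocks
            (fun _ _ => υ : Matrix (Fin 1) (Fin 1) ℝ)
            (fun _ j => a j / 2 : Matrix (Fin 1) (Fin p) ℝ)
            (fun i _ => a i / 2 : Matrix (Fin p) (Fin 1) ℝ)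
            (∑ k, lam k • Tm k)).PosSemidef ∧
        r = sSup {s | ∃ t ∈ T, s = ∑ k, lam k * t k} + υ} := by
  classical
  obtain ⟨t₀, ht₀i⟩ := hTint
  have ht₀T : t₀ ∈ T := interior_subset ht₀i
  have hTne : T.Nonempty := ⟨t₀, ht₀T⟩
  have hqnn : ∀ (k) (x : Fin p → ℝ), 0 ≤ x ⬝ᵥ Tm k *ᵥ x := fun k x => psd_nonneg (hTsd k) x
  have h0X : (0 : Fin p → ℝ) ∈ X := by
    rw [hX]
    exact ⟨t₀, ht₀T, fun k => by
      rw [Matrix.mulVec_zero, dotProduct_zero]; exact hTnonneg t₀ ht₀T k⟩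
  set A : Set ℝ := {r | ∃ x ∈ X, r = a ⬝ᵥ x} with hAdef
  have hAne : A.Nonempty := ⟨a ⬝ᵥ 0, 0, h0X, rfl⟩
  obtain ⟨m, hm, hmq⟩ := posdef_bound hTsum
  obtain ⟨C, hC⟩ : ∃ C, ∀ t ∈ T, (∑ k, t k) ≤ C := by
    obtain ⟨C, hC⟩ := (hTcomp.image
      (continuous_finset_sum _ fun k _ => continuous_apply k)).bddAbove
    exact ⟨C, fun t ht => hC ⟨t, ht, rfl⟩⟩
  have hXnorm : ∀ x ∈ X, m * ‖x‖^2 ≤ C := by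
    intro x hx
    rw [hX] at hx
    obtain ⟨t, ht, hqt⟩ := hx
    have h1 : x ⬝ᵥ (∑ k, Tm k) *ᵥ x = ∑ k, x ⬝ᵥ Tm k *ᵥ x := dot_sum' Tm x
    have h2 : ∑ k, x ⬝ᵥ Tm k *ᵥ x ≤ ∑ k, t k :=
      Finset.sum_le_sum fun k _ => hqt k
    have h3 := hmq x
    have h4 := hC t ht
    linarith
  have hAb : BddAbove A := by
    refine ⟨(∑ i, |a i|) * Real.sqrt (C / m), ?_⟩
    rintro r ⟨x, hx, rfl⟩
    have hxn : ‖x‖ ≤ Real.sqrt (C / m) := by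
      rw [show (C / m) = (C/m) from rfl] at *
      have h1 := hXnorm x hx
      have h2 : ‖x‖^2 ≤ C / m := by rw [le_div_iff₀ hm]; linarith
      have := Real.sqrt_le_sqrt h2
      rwa [Real.sqrt_sq (norm_nonneg x)] at this
    have hdb : a ⬝ᵥ x ≤ (∑ i, |a i|) * ‖x‖ := by
      rw [Finset.sum_mul]
      refine le_trans (Finset.sum_le_sum fun i _ => ?_) le_rfl
      calc a i * x i ≤ |a i * x i| := le_abs_self _
        _ = |a i| * |x i| := abs_mul _ _
        _ ≤ |a i| * ‖x‖ := by
            apply mul_le_mul_of_nonneg_left _ (abs_nonneg _)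
            exact norm_le_pi_norm x i
    calc a ⬝ᵥ x ≤ (∑ i, |a i|) * ‖x‖ := hdb
      _ ≤ (∑ i, |a i|) * Real.sqrt (C / m) := by
          apply mul_le_mul_of_nonneg_left hxn
          exact Finset.sum_nonneg fun i _ => abs_nonneg _
  set M : ℝ := sSup A with hMdef
  have hMub : ∀ x ∈ X, a ⬝ᵥ x ≤ M := fun x hx => le_csSup hAb ⟨x, hx, rfl⟩
  have hφne : ∀ lam : Fin K → ℝ, {s | ∃ t ∈ T, s = ∑ k, lam k * t k}.Nonempty :=
    fun lam => ⟨_, t₀, ht₀T, rfl⟩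
  have hφbdd : ∀ lam : Fin K → ℝ, BddAbove {s | ∃ t ∈ T, s = ∑ k, lam k * t k} := by
    intro lam
    obtain ⟨C', hC'⟩ := (hTcomp.image (continuous_finset_sum _ fun k _ =>
      continuous_const.mul (continuous_apply k))).bddAbove
    refine ⟨C', ?_⟩
    rintro s ⟨t, ht, rfl⟩
    exact hC' ⟨t, ht, rfl⟩
  -- weak duality
  have weak : ∀ (lam : Fin K → ℝ) (υ : ℝ), (∀ k, 0 ≤ lam k) →
      (Matrix.fromBlocks
            (fun _ _ => υ : Matrix (Fin 1) (Fin 1) ℝ)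
            (fun _ j => a j / 2 : Matrix (Fin 1) (Fin p) ℝ)
            (fun i _ => a i / 2 : Matrix (Fin p) (Fin 1) ℝ)
            (∑ k, lam k • Tm k)).PosSemidef →
      ∀ x ∈ X, a ⬝ᵥ x ≤ sSup {s | ∃ t ∈ T, s = ∑ k, lam k * t k} + υ := by
    intro lam υ hlam hpsd x hx
    rw [hX] at hx
    obtain ⟨t, ht, hqt⟩ := hx
    have h := hpsd.dotProduct_mulVec_nonneg (Sum.elim (fun _ => (-1:ℝ)) x)
    rw [star_trivial, block_quad] at h
    rw [dot_sum_smul] at h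
    have h2 : ∑ k, lam k * (x ⬝ᵥ Tm k *ᵥ x) ≤ ∑ k, lam k * t k :=
      Finset.sum_le_sum fun k _ => mul_le_mul_of_nonneg_left (hqt k) (hlam k)
    have h3 : ∑ k, lam k * t k ≤ sSup {s | ∃ t ∈ T, s = ∑ k, lam k * t k} :=
      le_csSup (hφbdd lam) ⟨t, ht, rfl⟩
    nlinarith [h, h2, h3]
  -- strong duality : M is attained by some feasible (lam, υ)
  have strong : ∃ (lam : Fin K → ℝ) (υ : ℝ), (∀ k, 0 ≤ lam k) ∧
      (Matrix.fromBlocks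
            (fun _ _ => υ : Matrix (Fin 1) (Fin 1) ℝ)
            (fun _ j => a j / 2 : Matrix (Fin 1) (Fin p) ℝ)
            (fun i _ => a i / 2 : Matrix (Fin p) (Fin 1) ℝ)
            (∑ k, lam k • Tm k)).PosSemidef ∧
      M = sSup {s | ∃ t ∈ T, s = ∑ k, lam k * t k} + υ := by
    set S : Set (ℝ × (Fin K → ℝ)) :=
      {z | ∃ x : Fin p → ℝ, z.1 < a ⬝ᵥ x ∧ ∀ k, x ⬝ᵥ Tm k *ᵥ x < z.2 k} with hSdef
    have hSo : IsOpen S := by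
      have hS2 : S = ⋃ x : Fin p → ℝ, ({z : ℝ × (Fin K → ℝ) | z.1 < a ⬝ᵥ x} ∩
          ⋂ k, {z : ℝ × (Fin K → ℝ) | x ⬝ᵥ Tm k *ᵥ x < z.2 k}) := by
        ext z
        simp only [hSdef, Set.mem_setOf_eq, Set.mem_iUnion, Set.mem_inter_iff,
          Set.mem_iInter]
      rw [hS2]
      exact isOpen_iUnion fun x =>
        ((isOpen_lt continuous_fst continuous_const).inter
          (isOpen_iInter_of_finite fun k =>
            isOpen_lt continuous_const ((continuous_apply k).comp continuous_snd)))
    have hSc : Convex ℝ S := by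
      rw [convex_iff_forall_pos]
      rintro z1 ⟨x1, hx11, hx12⟩ z2 ⟨x2, hx21, hx22⟩ α β hα hβ hab
      refine ⟨α • x1 + β • x2, ?_, ?_⟩
      · have hd : a ⬝ᵥ (α • x1 + β • x2) = α * (a ⬝ᵥ x1) + β * (a ⬝ᵥ x2) := by
          rw [dotProduct_add, dotProduct_smul, dotProduct_smul,
            smul_eq_mul, smul_eq_mul]
        have hfst : (α • z1 + β • z2).1 = α * z1.1 + β * z2.1 := rfl
        rw [hfst, hd]
        exact add_lt_add (mul_lt_mul_of_pos_left hx11 hα) (mul_lt_mul_of_pos_left hx21 hβ)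
      · intro k
        have h1 := quad_convex (hTsd k) x1 x2 hα.le hβ.le hab
        have h2 : (α • z1 + β • z2).2 k = α * z1.2 k + β * z2.2 k := rfl
        rw [h2]
        calc (α • x1 + β • x2) ⬝ᵥ Tm k *ᵥ (α • x1 + β • x2)
            ≤ α * (x1 ⬝ᵥ Tm k *ᵥ x1) + β * (x2 ⬝ᵥ Tm k *ᵥ x2) := h1
          _ < α * z1.2 k + β * z2.2 k :=
              add_lt_add (mul_lt_mul_of_pos_left (hx12 k) hα)
                (mul_lt_mul_of_pos_left (hx22 k) hβ)
    have hT'c : Convex ℝ ((Ici M) ×ˢ T) := (convex_Ici M).prod hTconv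
    have hdisj : Disjoint S ((Ici M) ×ˢ T) := by
      rw [Set.disjoint_left]
      rintro z ⟨x, hz1, hz2⟩ ⟨hzM, hzT⟩
      have hxX : x ∈ X := by rw [hX]; exact ⟨z.2, hzT, fun k => (hz2 k).le⟩
      have h1 := hMub x hxX
      have h2 : M ≤ z.1 := hzM
      linarith
    obtain ⟨f, c, hfS, hfT⟩ := geometric_hahn_banach_open hSc hSo hT'c hdisj
    set α0 : ℝ := f (1, 0) with hα0def
    set μ : Fin K → ℝ := fun k => f (0, Pi.single k 1) with hμdef
    have hdec : ∀ (s : ℝ) (u : Fin K → ℝ), f (s, u) = s * α0 + ∑ k, u k * μ k :=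
      fun s u => functional_decomp f s u
    have hq0 : ∀ k, (0 : Fin p → ℝ) ⬝ᵥ Tm k *ᵥ (0 : Fin p → ℝ) = 0 := by
      intro k; rw [Matrix.mulVec_zero, dotProduct_zero]
    have hmaster : ∀ x : Fin p → ℝ,
        (a ⬝ᵥ x) * α0 + ∑ k, (x ⬝ᵥ Tm k *ᵥ x) * μ k ≤ c := by
      intro x
      apply le_of_forall_pos_linear (d := -α0 + ∑ k, μ k)
      intro ε hε
      have hz : ((a ⬝ᵥ x - ε, fun k => x ⬝ᵥ Tm k *ᵥ x + ε) : ℝ × (Fin K → ℝ)) ∈ S :=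
        ⟨x, sub_lt_self _ hε, fun k => lt_add_of_pos_right _ hε⟩
      have h1 := hfS _ hz
      rw [hdec] at h1
      have hsum : ∑ k, (x ⬝ᵥ Tm k *ᵥ x + ε) * μ k
          = ∑ k, (x ⬝ᵥ Tm k *ᵥ x) * μ k + ε * ∑ k, μ k := by
        rw [Finset.mul_sum, ← Finset.sum_add_distrib]
        exact Finset.sum_congr rfl fun k _ => by ring
      rw [hsum] at h1
      ring_nf at h1 ⊢
      linarith
    have hα0 : 0 ≤ α0 := by
      have hkey : -α0 ≤ 0 := by
        apply nonpos_of_forall_pos_mul (e := ∑ k, μ k) (c := c)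
        intro n hn
        have hz : ((-n, fun _ => (1:ℝ)) : ℝ × (Fin K → ℝ)) ∈ S :=
          ⟨0, by simp [dotProduct_zero]; linarith, fun k => by rw [hq0 k]; norm_num⟩
        have h1 := hfS _ hz
        rw [hdec] at h1
        simp only [one_mul] at h1
        linarith
      linarith
    have hμ : ∀ k, μ k ≤ 0 := by
      intro k0
      apply nonpos_of_forall_pos_mul (e := -α0 + ∑ k, μ k) (c := c)
      intro n hn
      set u : Fin K → ℝ := fun k => 1 + n * (Pi.single k0 (1:ℝ) : Fin K → ℝ) k with hudef
      have hz : ((-1, u) : ℝ × (Fin K → ℝ)) ∈ S := by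
        refine ⟨0, by simp [dotProduct_zero], fun k => ?_⟩
        rw [hq0 k, hudef]
        simp only
        rcases eq_or_ne k k0 with h | h
        · subst h; rw [Pi.single_eq_same]; linarith
        · rw [Pi.single_eq_of_ne h]; norm_num
      have h1 := hfS _ hz
      rw [hdec] at h1
      have hsum : ∑ k, u k * μ k = ∑ k, μ k + n * μ k0 := by
        have e1 : ∀ k, u k * μ k = μ k + n * ((Pi.single k0 (1:ℝ) : Fin K → ℝ) k * μ k) := by
          intro k; rw [hudef]; ring
        rw [Finset.sum_congr rfl fun k _ => e1 k, Finset.sum_add_distrib]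
        congr 1
        rw [← Finset.mul_sum]
        congr 1
        rw [Finset.sum_eq_single k0]
        · simp
        · intro b _ hb; simp [Pi.single_apply, hb]
        · intro h; exact absurd (Finset.mem_univ k0) h
      rw [hsum] at h1
      linarith
    have hTside : ∀ t ∈ T, c ≤ M * α0 + ∑ k, t k * μ k := by
      intro t ht
      have h1 := hfT (M, t) ⟨self_mem_Ici, ht⟩
      rwa [hdec] at h1
    by_cases hα0z : α0 = 0
    · exfalso
      by_cases hμz : ∀ k, μ k = 0
      · have hz : ((-1, fun _ => (1:ℝ)) : ℝ × (Fin K → ℝ)) ∈ S :=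
          ⟨0, by simp [dotProduct_zero], fun k => by rw [hq0 k]; norm_num⟩
        have h1 := hfS _ hz
        rw [hdec] at h1
        simp only [hα0z, hμz, mul_zero, Finset.sum_const_zero] at h1
        have h2 := hTside t₀ ht₀T
        simp only [hα0z, hμz, mul_zero, Finset.sum_const_zero, add_zero] at h2
        linarith
      · push_neg at hμz
        obtain ⟨k0, hk0⟩ := hμz
        have hk0' : μ k0 < 0 := lt_of_le_of_ne (hμ k0) hk0
        obtain ⟨ε, hε, hball⟩ := Metric.mem_nhds_iff.mp (mem_interior_iff_mem_nhds.mp ht₀i)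
        have ht1 : t₀ + (Pi.single k0 (ε/2) : Fin K → ℝ) ∈ T := by
          apply hball
          rw [Metric.mem_ball, dist_eq_norm]
          have : t₀ + (Pi.single k0 (ε/2) : Fin K → ℝ) - t₀ = (Pi.single k0 (ε/2) : Fin K → ℝ) := by ring_nf
          rw [this, Pi.norm_single]
          rw [Real.norm_eq_abs, abs_of_pos (by linarith)]
          linarith
        have h1 := hTside _ ht1
        rw [hα0z, mul_zero, zero_add] at h1
        have hsum : ∑ k, (t₀ + (Pi.single k0 (ε/2) : Fin K → ℝ)) k * μ k
            = ∑ k, t₀ k * μ k + (ε/2) * μ k0 := by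
          have e1 : ∀ k, (t₀ + (Pi.single k0 (ε/2) : Fin K → ℝ)) k * μ k
              = t₀ k * μ k + (Pi.single k0 (ε/2) : Fin K → ℝ) k * μ k := by
            intro k; simp only [Pi.add_apply]; ring
          rw [Finset.sum_congr rfl fun k _ => e1 k, Finset.sum_add_distrib]
          congr 1
          rw [Finset.sum_eq_single k0]
          · simp
          · intro b _ hb; simp [Pi.single_apply, hb]
          · intro h; exact absurd (Finset.mem_univ k0) h
        rw [hsum] at h1
        have hsum2 : ∑ k, t₀ k * μ k ≤ 0 :=
          Finset.sum_nonpos fun k _ => mul_nonpos_of_nonneg_of_nonpos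
            (hTnonneg t₀ ht₀T k) (hμ k)
        -- c ≥ 0 from hmaster at x = 0
        have hc0 : 0 ≤ c := by
          have h2 := hmaster 0
          simp only [dotProduct_zero, zero_mul] at h2
          have h3 : ∑ k, ((0:Fin p → ℝ) ⬝ᵥ Tm k *ᵥ (0:Fin p → ℝ)) * μ k = 0 := by
            apply Finset.sum_eq_zero; intro k _; rw [hq0 k]; ring
          rw [h3] at h2
          linarith
        nlinarith [hk0', hε]
    · have hα0p : 0 < α0 := lt_of_le_of_ne hα0 (Ne.symm hα0z)
      refine ⟨fun k => -μ k / α0, M - sSup {s | ∃ t ∈ T, s = ∑ k, (-μ k / α0) * t k}, ?_, ?_, ?_⟩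
      · intro k
        exact div_nonneg (neg_nonneg.mpr (hμ k)) hα0p.le
      · -- PosSemidef
        have hφle : sSup {s | ∃ t ∈ T, s = ∑ k, (-μ k / α0) * t k} ≤ M - c / α0 := by
          apply csSup_le (hφne _)
          rintro s ⟨t, ht, rfl⟩
          have h1 := hTside t ht
          have h2 : ∑ k, (-μ k / α0) * t k = (-(∑ k, t k * μ k)) / α0 := by
            rw [← Finset.sum_neg_distrib, Finset.sum_div]
            exact Finset.sum_congr rfl fun k _ => by ring
          rw [h2, div_le_iff₀ hα0p]
          have h3 : (M - c / α0) * α0 = M * α0 - c := by field_simp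
          rw [h3]
          linarith
        set υ : ℝ := M - sSup {s | ∃ t ∈ T, s = ∑ k, (-μ k / α0) * t k} with hυdef
        have hcυ : c / α0 ≤ υ := by rw [hυdef]; linarith
        have hH : ∀ x : Fin p → ℝ,
            a ⬝ᵥ x ≤ υ + ∑ k, (-μ k / α0) * (x ⬝ᵥ Tm k *ᵥ x) := by
          intro x
          have h1 := hmaster x
          have h2 : ∑ k, (-μ k / α0) * (x ⬝ᵥ Tm k *ᵥ x)
              = (-(∑ k, (x ⬝ᵥ Tm k *ᵥ x) * μ k)) / α0 := by
            rw [← Finset.sum_neg_distrib, Finset.sum_div]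
            exact Finset.sum_congr rfl fun k _ => by ring
          rw [h2]
          have h3 : a ⬝ᵥ x ≤ (c - ∑ k, (x ⬝ᵥ Tm k *ᵥ x) * μ k) / α0 := by
            rw [le_div_iff₀ hα0p]
            linarith
          have h4 : (c - ∑ k, (x ⬝ᵥ Tm k *ᵥ x) * μ k) / α0
              = c / α0 + (-(∑ k, (x ⬝ᵥ Tm k *ᵥ x) * μ k)) / α0 := by ring
          linarith
        have hυnn : 0 ≤ υ := by
          have h1 := hH 0
          have h2 : ∑ k, (-μ k / α0) * ((0:Fin p → ℝ) ⬝ᵥ Tm k *ᵥ (0:Fin p → ℝ)) = 0 := by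
            apply Finset.sum_eq_zero; intro k _; rw [hq0 k]; ring
          rw [dotProduct_zero, h2] at h1
          linarith
        refine Matrix.PosSemidef.of_dotProduct_mulVec_nonneg ?_ ?_
        · -- Hermitian
          erw [Matrix.IsHermitian, Matrix.fromBlocks_conjTranspose]
          have e1 : (fun _ _ => υ : Matrix (Fin 1) (Fin 1) ℝ)ᴴ = fun _ _ => υ := by
            ext i j; exact star_trivial υ
          have e2 : (fun i _ => a i / 2 : Matrix (Fin p) (Fin 1) ℝ)ᴴ
              = (fun _ j => a j / 2 : Matrix (Fin 1) (Fin p) ℝ) := by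
            ext i j; exact star_trivial (a j / 2)
          have e3 : (fun _ j => a j / 2 : Matrix (Fin 1) (Fin p) ℝ)ᴴ
              = (fun i _ => a i / 2 : Matrix (Fin p) (Fin 1) ℝ) := by
            ext i j; exact star_trivial (a i / 2)
          have e4 : (∑ k, (-μ k / α0) • Tm k)ᴴ = ∑ k, (-μ k / α0) • Tm k := by
            rw [Matrix.conjTranspose_sum]
            exact Finset.sum_congr rfl fun k _ => by
              rw [Matrix.conjTranspose_smul, star_trivial, (hTsd k).1]
          rw [e1, e2, e3, e4]
        · intro y
          rw [star_trivial]
          have hy := y_decomp y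
          rw [hy, block_quad]
          set s : ℝ := y (Sum.inl 0)
          set x : Fin p → ℝ := y ∘ Sum.inr
          rw [dot_sum_smul]
          rcases eq_or_ne s 0 with hs | hs
          · rw [hs]
            have : ∑ k, (-μ k / α0) * (x ⬝ᵥ Tm k *ᵥ x) ≥ 0 :=
              Finset.sum_nonneg fun k _ => mul_nonneg
                (div_nonneg (neg_nonneg.mpr (hμ k)) hα0p.le) (hqnn k x)
            nlinarith
          · have hs2 : (0:ℝ) < s^2 := by positivity
            have h1 := hH (-(s⁻¹ • x))
            have ha' : a ⬝ᵥ (-(s⁻¹ • x)) = -(s⁻¹ * (a ⬝ᵥ x)) := by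
              rw [dotProduct_neg, dotProduct_smul, smul_eq_mul]
            have hq' : ∀ k, (-(s⁻¹ • x)) ⬝ᵥ Tm k *ᵥ (-(s⁻¹ • x))
                = s⁻¹ * (s⁻¹ * (x ⬝ᵥ Tm k *ᵥ x)) := by
              intro k
              rw [Matrix.mulVec_neg, dotProduct_neg, neg_dotProduct, neg_neg,
                Matrix.mulVec_smul, dotProduct_smul, smul_dotProduct]
              simp [smul_eq_mul]
            rw [ha'] at h1
            have hsum' : ∑ k, (-μ k / α0) * ((-(s⁻¹ • x)) ⬝ᵥ Tm k *ᵥ (-(s⁻¹ • x)))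
                = s⁻¹ * (s⁻¹ * ∑ k, (-μ k / α0) * (x ⬝ᵥ Tm k *ᵥ x)) := by
              rw [Finset.mul_sum]
              rw [show ∀ g : Fin K → ℝ, s⁻¹ * ∑ k, g k = ∑ k, s⁻¹ * g k from
                fun g => Finset.mul_sum _ _ _]
              exact Finset.sum_congr rfl fun k _ => by rw [hq' k]; ring
            rw [hsum'] at h1
            -- h1 : -(s⁻¹ * (a ⬝ᵥ x)) ≤ υ + s⁻¹ * (s⁻¹ * Q) where Q = ∑ ...
            have h3 := mul_le_mul_of_nonneg_left h1 hs2.le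
            have e5 : s^2 * (-(s⁻¹ * (a ⬝ᵥ x))) = -(s * (a ⬝ᵥ x)) := by
              field_simp [pow_two]
              all_goals ring
            have e6 : s^2 * (υ + s⁻¹ * (s⁻¹ * ∑ k, (-μ k / α0) * (x ⬝ᵥ Tm k *ᵥ x)))
                = υ * s^2 + ∑ k, (-μ k / α0) * (x ⬝ᵥ Tm k *ᵥ x) := by
              field_simp [pow_two]
              all_goals ring
            rw [e5, e6] at h3
            linarith
      · -- value
        show M = sSup {s | ∃ t ∈ T, s = ∑ k, (-μ k / α0) * t k}
            + (M - sSup {s | ∃ t ∈ T, s = ∑ k, (-μ k / α0) * t k})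
        ring

  obtain ⟨lam₀, υ₀, hlam₀, hpsd₀, hval₀⟩ := strong
  have hMB : M ∈ {r | ∃ (lam : Fin K → ℝ) (υ : ℝ), (∀ k, 0 ≤ lam k) ∧
        (Matrix.fromBlocks
            (fun _ _ => υ : Matrix (Fin 1) (Fin 1) ℝ)
            (fun _ j => a j / 2 : Matrix (Fin 1) (Fin p) ℝ)
            (fun i _ => a i / 2 : Matrix (Fin p) (Fin 1) ℝ)
            (∑ k, lam k • Tm k)).PosSemidef ∧
        r = sSup {s | ∃ t ∈ T, s = ∑ k, lam k * t k} + υ} :=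
    ⟨lam₀, υ₀, hlam₀, hpsd₀, hval₀⟩
  have hBlb : ∀ r ∈ {r | ∃ (lam : Fin K → ℝ) (υ : ℝ), (∀ k, 0 ≤ lam k) ∧
        (Matrix.fromBlocks
            (fun _ _ => υ : Matrix (Fin 1) (Fin 1) ℝ)
            (fun _ j => a j / 2 : Matrix (Fin 1) (Fin p) ℝ)
            (fun i _ => a i / 2 : Matrix (Fin p) (Fin 1) ℝ)
            (∑ k, lam k • Tm k)).PosSemidef ∧
        r = sSup {s | ∃ t ∈ T, s = ∑ k, lam k * t k} + υ}, M ≤ r := by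
    rintro r ⟨lam, υ, hlam, hpsd, rfl⟩
    refine csSup_le hAne ?_
    rintro s ⟨x, hx, rfl⟩
    exact weak lam υ hlam hpsd x hx
  have hBbd : BddBelow {r | ∃ (lam : Fin K → ℝ) (υ : ℝ), (∀ k, 0 ≤ lam k) ∧
        (Matrix.fromBlocks
            (fun _ _ => υ : Matrix (Fin 1) (Fin 1) ℝ)
            (fun _ j => a j / 2 : Matrix (Fin 1) (Fin p) ℝ)
            (fun i _ => a i / 2 : Matrix (Fin p) (Fin 1) ℝ)
            (∑ k, lam k • Tm k)).PosSemidef ∧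
        r = sSup {s | ∃ t ∈ T, s = ∑ k, lam k * t k} + υ} := by
    refine ⟨a ⬝ᵥ 0, ?_⟩
    rintro r ⟨lam, υ, hlam, hpsd, rfl⟩
    exact weak lam υ hlam hpsd 0 h0X
  refine le_antisymm ?_ ?_
  · exact le_csInf ⟨M, hMB⟩ hBlb
  · exact csInf_le hBbd hMB
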